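/- Let N, L be positive integers with L ≤ N, and let μ : Fin N → ℝ satisfy 0 ≤ μ[n] ≤ 1 for all n and ∑ n, μ[n] = L. Then there exist F ≤ N, positive reals α_1,...,α_F with ∑_f α_f = 1, and subsets P_1,...,P_F ⊆ Fin N with |P_f| = L for all f, such that for every machine n, ∑_{f : n ∈ P_f} α_f = μ[n]. -/

import Mathlib

open Finset

private lemma parity_ne_one {N L : ℕ} (μ : Fin N → ℝ)
    (hμ : ∀ n, 0 ≤ μ n ∧ μ n ≤ 1) (hsum : ∑ n, μ n = (L : ℝ)) :
    (univ.filter fun n => μ n ≠ 0 ∧ μ n ≠ 1).card ≠ 1 := by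
  intro h1
  obtain ⟨n₀, hn₀⟩ := card_eq_one.mp h1
  have hmem : n₀ ∈ univ.filter fun n => μ n ≠ 0 ∧ μ n ≠ 1 := by
    rw [hn₀]; exact mem_singleton_self _
  rw [mem_filter] at hmem
  have hrest : ∀ n, n ≠ n₀ → μ n = 0 ∨ μ n = 1 := by
    intro n hn
    by_contra hc
    push_neg at hc
    have hmem2 : n ∈ univ.filter fun n => μ n ≠ 0 ∧ μ n ≠ 1 := by
      simp [hc.1, hc.2]
    rw [hn₀, mem_singleton] at hmem2
    exact hn hmem2
  have hsplit : ∑ n, μ n = μ n₀ + ∑ n ∈ univ.erase n₀, μ n := by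
    rw [add_comm, Finset.sum_erase_add _ _ (mem_univ n₀)]
  have hrestsum : ∑ n ∈ univ.erase n₀, μ n
      = (((univ.erase n₀).filter fun n => μ n = 1).card : ℝ) := by
    have : ∑ n ∈ univ.erase n₀, μ n
        = ∑ n ∈ (univ.erase n₀).filter (fun n => μ n = 1), (1 : ℝ) := by
      rw [Finset.sum_filter]
      apply Finset.sum_congr rfl
      intro n hn
      rcases hrest n (Finset.ne_of_mem_erase hn) with h | h
      · simp [h]
      · simp [h]
    rw [this, Finset.sum_const, nsmul_eq_mul, mul_one]
  set c := ((univ.erase n₀).filter fun n => μ n = 1).card with hc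
  have hval : μ n₀ = (L : ℝ) - c := by
    rw [hsum] at hsplit
    rw [hrestsum] at hsplit
    linarith
  have h0 : 0 < μ n₀ := lt_of_le_of_ne (hμ n₀).1 (Ne.symm hmem.2.1)
  have h1' : μ n₀ < 1 := lt_of_le_of_ne (hμ n₀).2 hmem.2.2
  have hcL : c < L := by
    have : (c : ℝ) < L := by linarith
    exact_mod_cast this
  have : (c : ℝ) + 1 ≤ L := by exact_mod_cast hcL
  linarith

private lemma aux (L : ℕ) (hL : 0 < L) :
    ∀ (k N : ℕ), L ≤ N → ∀ μ : Fin N → ℝ,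
      (∀ n, 0 ≤ μ n ∧ μ n ≤ 1) → (∑ n, μ n = (L : ℝ)) →
      (univ.filter fun n => μ n ≠ 0 ∧ μ n ≠ 1).card ≤ k →
      ∃ F, F ≤ max 1 k ∧ ∃ (α : Fin F → ℝ) (P : Fin F → Finset (Fin N)),
        (∀ f, 0 < α f) ∧ (∑ f, α f = 1) ∧ (∀ f, (P f).card = L) ∧
        (∀ n, (∑ f, if n ∈ P f then α f else 0) = μ n) := by
  intro k
  induction k with
  | zero =>
    intro N hLN μ hμ hsum hcard
    have hint : ∀ n, μ n = 0 ∨ μ n = 1 := by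
      intro n; by_contra hc; push_neg at hc
      have hmem : n ∈ univ.filter fun n => μ n ≠ 0 ∧ μ n ≠ 1 := by
        simp [hc.1, hc.2]
      have := card_pos.mpr ⟨n, hmem⟩
      omega
    set S := univ.filter fun n => μ n = 1 with hSdef
    have hcardS : (S.card : ℝ) = (L : ℝ) := by
      rw [← hsum]
      have : ∑ n, μ n = ∑ n ∈ S, (1 : ℝ) := by
        rw [hSdef, Finset.sum_filter]
        apply Finset.sum_congr rfl
        intro n _
        rcases hint n with h | h
        · simp [h]
        · simp [h]
      rw [this, Finset.sum_const, nsmul_eq_mul, mul_one]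
    refine ⟨1, by simp, fun _ => 1, fun _ => S, fun _ => one_pos, by simp, ?_, ?_⟩
    · intro f
      have : S.card = L := by exact_mod_cast hcardS
      exact this
    · intro n
      rw [Fin.sum_univ_one]
      rcases hint n with h | h
      · have : n ∉ S := by simp [hSdef, h]
        simp [this, h]
      · have : n ∈ S := by simp [hSdef, h]
        simp [this, h]
  | succ k ih =>
    intro N hLN μ hμ hsum hcard
    by_cases hle : (univ.filter fun n => μ n ≠ 0 ∧ μ n ≠ 1).card ≤ k
    · obtain ⟨F, hF, rest⟩ := ih N hLN μ hμ hsum hle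
      exact ⟨F, le_trans hF (max_le_max le_rfl (Nat.le_succ k)), rest⟩
    push_neg at hle
    obtain ⟨nstar, hnstar⟩ := card_pos.mp (by omega : 0 < (univ.filter fun n => μ n ≠ 0 ∧ μ n ≠ 1).card)
    rw [mem_filter] at hnstar
    have hk1 : 1 ≤ k := by
      by_contra h
      have hk0 : k = 0 := by omega
      have : (univ.filter fun n => μ n ≠ 0 ∧ μ n ≠ 1).card = 1 := by omega
      exact parity_ne_one μ hμ hsum this
    have hLN' : L < N := by
      rcases lt_or_eq_of_le hLN with h | h
      · exact h
      exfalso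
      have h1 : μ nstar < 1 := lt_of_le_of_ne (hμ nstar).2 hnstar.2.2
      have hlt : ∑ n, μ n < ∑ _n : Fin N, (1 : ℝ) :=
        Finset.sum_lt_sum (fun n _ => (hμ n).2) ⟨nstar, mem_univ _, h1⟩
      rw [hsum, Finset.sum_const, card_univ, Fintype.card_fin, nsmul_eq_mul, mul_one] at hlt
      have : L < N := by exact_mod_cast hlt
      omega
    set S := univ.filter (fun n => μ n = 1) with hSdef
    set supp := univ.filter (fun n => μ n ≠ 0) with hsuppdef
    have hSsupp : S ⊆ supp := by
      intro n hn
      rw [hSdef, mem_filter] at hn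
      rw [hsuppdef, mem_filter]
      exact ⟨mem_univ n, by rw [hn.2]; exact one_ne_zero⟩
    have hScard : S.card ≤ L := by
      have h1 : (S.card : ℝ) ≤ (L : ℝ) := by
        have e1 : (S.card : ℝ) = ∑ n ∈ S, μ n := by
          rw [show ∑ n ∈ S, μ n = ∑ _n ∈ S, (1 : ℝ) from
            Finset.sum_congr rfl (fun n hn => by
              rw [hSdef, mem_filter] at hn; rw [hn.2])]
          rw [Finset.sum_const, nsmul_eq_mul, mul_one]
        rw [e1, ← hsum]
        exact Finset.sum_le_sum_of_subset_of_nonneg (subset_univ S)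
          (fun n _ _ => (hμ n).1)
      exact_mod_cast h1
    have hsuppcard : L ≤ supp.card := by
      have h1 : (L : ℝ) ≤ (supp.card : ℝ) := by
        rw [← hsum]
        have e1 : ∑ n, μ n = ∑ n ∈ supp, μ n := by
          symm
          apply Finset.sum_subset (subset_univ supp)
          intro n _ hn
          rw [hsuppdef, mem_filter] at hn
          push_neg at hn
          exact hn (mem_univ n)
        rw [e1]
        calc ∑ n ∈ supp, μ n ≤ ∑ _n ∈ supp, (1 : ℝ) :=
              Finset.sum_le_sum (fun n _ => (hμ n).2)
          _ = supp.card := by rw [Finset.sum_const, nsmul_eq_mul, mul_one]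
      exact_mod_cast h1
    obtain ⟨P, hSP, hPsupp, hPcard⟩ :=
      Finset.exists_subsuperset_card_eq hSsupp hScard hsuppcard
    have hPcard' : P.card = L := by omega
    have hPne : P.Nonempty := card_pos.mp (by omega)
    have hPcne : (univ \ P).Nonempty := by
      apply card_pos.mp
      rw [card_sdiff_of_subset (subset_univ P), card_univ, Fintype.card_fin]
      omega
    obtain ⟨n₀, hn₀P, hn₀min⟩ := Finset.exists_min_image P μ hPne
    obtain ⟨n₁, hn₁, hn₁max⟩ := Finset.exists_max_image (univ \ P) μ hPcne
    have hn₁P : n₁ ∉ P := (mem_sdiff.mp hn₁).2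
    have ha_pos : 0 < μ n₀ := by
      have hmem := hPsupp hn₀P
      rw [hsuppdef, mem_filter] at hmem
      exact lt_of_le_of_ne (hμ n₀).1 (Ne.symm hmem.2)
    have hb_lt1 : μ n₁ < 1 := by
      refine lt_of_le_of_ne (hμ n₁).2 (fun h => hn₁P (hSP ?_))
      rw [hSdef, mem_filter]; exact ⟨mem_univ _, h⟩
    set α := min (μ n₀) (1 - μ n₁) with hαdef
    have hα_pos : 0 < α := lt_min ha_pos (by linarith)
    have hα_lt1 : α < 1 := by
      by_contra hc
      push_neg at hc
      have ha1 : 1 ≤ μ n₀ := le_trans hc (min_le_left _ _)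
      have hb0 : μ n₁ ≤ 0 := by
        have := le_trans hc (min_le_right _ _); linarith
      by_cases h : nstar ∈ P
      · have := hn₀min nstar h
        exact hnstar.2.2 (le_antisymm (hμ nstar).2 (le_trans ha1 this))
      · have := hn₁max nstar (mem_sdiff.mpr ⟨mem_univ _, h⟩)
        exact hnstar.2.1 (le_antisymm (le_trans this hb0) (hμ nstar).1)
    have h1α : (0:ℝ) < 1 - α := by linarith
    set ν := fun n => (μ n - if n ∈ P then α else 0) / (1 - α) with hνdef
    have hα_le : ∀ n ∈ P, α ≤ μ n := fun n hn =>
      le_trans (min_le_left _ _) (hn₀min n hn)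
    have hμ_le : ∀ n, n ∉ P → μ n ≤ 1 - α := by
      intro n hn
      have h1 := hn₁max n (mem_sdiff.mpr ⟨mem_univ _, hn⟩)
      have h2 := min_le_right (μ n₀) (1 - μ n₁)
      rw [← hαdef] at h2
      linarith
    have hν_bounds : ∀ n, 0 ≤ ν n ∧ ν n ≤ 1 := by
      intro n
      constructor
      · apply div_nonneg _ (le_of_lt h1α)
        by_cases h : n ∈ P
        · simp only [h, if_true]; linarith [hα_le n h]
        · simp only [h, if_false]; linarith [(hμ n).1]
      · rw [div_le_one h1α]
        by_cases h : n ∈ P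
        · simp only [h, if_true]; linarith [(hμ n).2]
        · simp only [h, if_false]; linarith [hμ_le n h]
    have hν_sum : ∑ n, ν n = (L : ℝ) := by
      simp only [hνdef]
      rw [← Finset.sum_div, Finset.sum_sub_distrib, hsum,
        Finset.sum_ite_mem, Finset.univ_inter, Finset.sum_const, hPcard',
        nsmul_eq_mul]
      rw [div_eq_iff (ne_of_gt h1α)]
      ring
    have hν0 : ∀ n, μ n = 0 → ν n = 0 := by
      intro n h
      have hnP : n ∉ P := by
        intro hc
        have := hPsupp hc
        rw [hsuppdef, mem_filter] at this
        exact this.2 h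
      simp [hνdef, h, hnP]
    have hν1 : ∀ n, μ n = 1 → ν n = 1 := by
      intro n h
      have hnP : n ∈ P := hSP (by rw [hSdef, mem_filter]; exact ⟨mem_univ _, h⟩)
      simp only [hνdef, h, hnP, if_true]
      exact div_self (ne_of_gt h1α)
    have hwit : ∃ n₂, n₂ ∈ (univ.filter fun n => μ n ≠ 0 ∧ μ n ≠ 1) ∧
        (ν n₂ = 0 ∨ ν n₂ = 1) := by
      rcases le_or_gt (μ n₀) (1 - μ n₁) with h | h
      · have hαa : α = μ n₀ := min_eq_left h
        refine ⟨n₀, ?_, Or.inl ?_⟩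
        · rw [mem_filter]
          refine ⟨mem_univ _, ne_of_gt ha_pos, ?_⟩
          rw [← hαa]; exact ne_of_lt hα_lt1
        · simp only [hνdef, hn₀P, if_true, hαa, sub_self, zero_div]
      · have hαb : α = 1 - μ n₁ := min_eq_right (le_of_lt h)
        have hb_pos : 0 < μ n₁ := by linarith [hα_lt1]
        refine ⟨n₁, ?_, Or.inr ?_⟩
        · rw [mem_filter]
          exact ⟨mem_univ _, ne_of_gt hb_pos, ne_of_lt hb_lt1⟩
        · simp only [hνdef, hn₁P, if_false, sub_zero]
          rw [hαb]
          rw [show (1 : ℝ) - (1 - μ n₁) = μ n₁ by ring]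
          exact div_self (ne_of_gt hb_pos)
    obtain ⟨n₂, hn₂frac, hn₂ν⟩ := hwit
    have hsubset : (univ.filter fun n => ν n ≠ 0 ∧ ν n ≠ 1) ⊆
        (univ.filter fun n => μ n ≠ 0 ∧ μ n ≠ 1).erase n₂ := by
      intro n hn
      rw [mem_filter] at hn
      rw [mem_erase, mem_filter]
      refine ⟨?_, mem_univ _, fun h => hn.2.1 (hν0 n h), fun h => hn.2.2 (hν1 n h)⟩
      rintro rfl
      rcases hn₂ν with h | h
      · exact hn.2.1 h
      · exact hn.2.2 h
    have hνcard : (univ.filter fun n => ν n ≠ 0 ∧ ν n ≠ 1).card ≤ k := by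
      have h1 := card_le_card hsubset
      rw [card_erase_of_mem hn₂frac] at h1
      omega
    obtain ⟨F', hF', α', P', hα'pos, hα'sum, hP'card, hP'sum⟩ :=
      ih N hLN ν hν_bounds hν_sum hνcard
    refine ⟨F' + 1, ?_, Fin.cons α (fun f => (1 - α) * α' f), Fin.cons P P',
      ?_, ?_, ?_, ?_⟩
    · have h1 : max 1 k = k := max_eq_right hk1
      have h2 : max 1 (k + 1) = k + 1 := max_eq_right (by omega)
      omega
    · intro f
      refine Fin.cases ?_ ?_ f
      · simpa using hα_pos
      · intro i; simpa using mul_pos h1α (hα'pos i)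
    · rw [Fin.sum_cons, ← Finset.mul_sum, hα'sum]
      ring
    · intro f
      refine Fin.cases ?_ ?_ f
      · simpa using hPcard'
      · intro i; simpa using hP'card i
    · intro n
      rw [Fin.sum_univ_succ]
      simp only [Fin.cons_zero, Fin.cons_succ]
      have h2 : ∑ f : Fin F', (if n ∈ P' f then (1 - α) * α' f else 0)
          = (1 - α) * ν n := by
        rw [← hP'sum n, Finset.mul_sum]
        apply Finset.sum_congr rfl
        intro f _
        by_cases h : n ∈ P' f <;> simp [h]
      rw [h2]
      simp only [hνdef]
      rw [mul_comm, div_mul_cancel₀ _ (ne_of_gt h1α)]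
      ring

theorem stmt9 (N L : ℕ) (hN : 0 < N) (hL : 0 < L) (hLN : L ≤ N)
    (μ : Fin N → ℝ) (hμ : ∀ n, 0 ≤ μ n ∧ μ n ≤ 1)
    (hsum : ∑ n, μ n = (L : ℝ)) :
    ∃ (F : ℕ), F ≤ N ∧
      ∃ (α : Fin F → ℝ) (P : Fin F → Finset (Fin N)),
        (∀ f, 0 < α f) ∧
        (∑ f, α f = 1) ∧
        (∀ f, (P f).card = L) ∧
        (∀ n, ∑ f ∈ univ.filter (fun f => n ∈ P f), α f = μ n) := by
  obtain ⟨F, hF, α, P, h1, h2, h3, h4⟩ :=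
    aux L hL (univ.filter fun n => μ n ≠ 0 ∧ μ n ≠ 1).card N hLN μ hμ hsum le_rfl
  refine ⟨F, ?_, α, P, h1, h2, h3, ?_⟩
  · have hcard : (univ.filter fun n => μ n ≠ 0 ∧ μ n ≠ 1).card ≤ N :=
      le_trans (card_filter_le _ _) (by simp)
    exact le_trans hF (max_le hN hcard)
  · intro n
    rw [Finset.sum_filter]
    exact h4 n
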